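/- Let K be a positive integer and let s ≥ 0, α ≥ 0, L ≥ 0, C ≥ 0 and Δ > 0 be reals. Suppose for each k ∈ {1, …, K} we are given reals Δ_k ∈ [0,1] and N_k ≥ 0 such that Σ_{k=1}^{K} N_k ≤ s, and such that N_k ≤ (2α√s)/K + 8L/Δ_k² + C whenever Δ_k ≥ Δ. Then Σ_{k=1}^{K} Δ_k·N_k ≤ 2α√s + 8KL/Δ + C·K + Δ·s. (In the bandit interpretation, Δ_k is the suboptimality gap of arm k in a stationary segment of length s, N_k its expected pull count, and this is the gap-independent form of the per-segment regret bound.) -/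

import Mathlib

/-- Let `K` be a positive integer and `s ≥ 0`, `α ≥ 0`, `L ≥ 0`,
`C ≥ 0`, `Δ > 0` reals.  Suppose for each `k ∈ {1,…,K}` we have `Δk k ∈ [0,1]`
and `N k ≥ 0` with `Σ_k N k ≤ s`, and `N k ≤ (2α√s)/K + 8L/(Δk k)² + C`
whenever `Δk k ≥ Δ`.  Then `Σ_k (Δk k)·(N k) ≤ 2α√s + 8KL/Δ + C·K + Δ·s`. -/
theorem gap_free_segment_regret_bound
    (K : ℕ) (hK : 0 < K) (s α L C Δ : ℝ)
    (hs : 0 ≤ s) (hα : 0 ≤ α) (hL : 0 ≤ L) (hC : 0 ≤ C) (hΔ : 0 < Δ)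
    (Δk N : Fin K → ℝ)
    (hΔk : ∀ k, Δk k ∈ Set.Icc (0 : ℝ) 1)
    (hN : ∀ k, 0 ≤ N k)
    (hNsum : ∑ k, N k ≤ s)
    (hNbound : ∀ k, Δ ≤ Δk k →
      N k ≤ (2 * α * Real.sqrt s) / K + 8 * L / (Δk k) ^ 2 + C) :
    ∑ k, Δk k * N k ≤ 2 * α * Real.sqrt s + 8 * K * L / Δ + C * K + Δ * s := by
  have hKpos : (0:ℝ) < K := by exact_mod_cast hK
  have hsq : 0 ≤ Real.sqrt s := Real.sqrt_nonneg s
  have key : ∀ k, Δk k * N k ≤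
      (2 * α * Real.sqrt s) / K + 8 * L / Δ + C + Δ * N k := by
    intro k
    obtain ⟨h0, h1⟩ := hΔk k
    by_cases hcase : Δ ≤ Δk k
    · have hpos : 0 < Δk k := lt_of_lt_of_le hΔ hcase
      have h2 : Δk k * N k ≤ Δk k * ((2 * α * Real.sqrt s) / K + 8 * L / (Δk k) ^ 2 + C) :=
        mul_le_mul_of_nonneg_left (hNbound k hcase) h0
      have h3 : Δk k * ((2 * α * Real.sqrt s) / K + 8 * L / (Δk k) ^ 2 + C)
          = Δk k * ((2 * α * Real.sqrt s) / K) + 8 * L / Δk k + Δk k * C := by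
        field_simp
      have h4 : Δk k * ((2 * α * Real.sqrt s) / K) ≤ (2 * α * Real.sqrt s) / K := by
        nlinarith [div_nonneg (by positivity : (0:ℝ) ≤ 2 * α * Real.sqrt s) hKpos.le]
      have h5 : 8 * L / Δk k ≤ 8 * L / Δ :=
        div_le_div_of_nonneg_left (by linarith) hΔ hcase
      have h6 : Δk k * C ≤ C := by nlinarith
      have h7 : 0 ≤ Δ * N k := mul_nonneg hΔ.le (hN k)
      linarith
    · push_neg at hcase
      have : Δk k * N k ≤ Δ * N k := mul_le_mul_of_nonneg_right hcase.le (hN k)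
      have : 0 ≤ (2 * α * Real.sqrt s) / K + 8 * L / Δ + C := by positivity
      linarith
  calc ∑ k, Δk k * N k
      ≤ ∑ k : Fin K, ((2 * α * Real.sqrt s) / K + 8 * L / Δ + C + Δ * N k) :=
        Finset.sum_le_sum fun k _ => key k
    _ = K * ((2 * α * Real.sqrt s) / K + 8 * L / Δ + C) + Δ * ∑ k, N k := by
        rw [Finset.sum_add_distrib, Finset.sum_const, ← Finset.mul_sum]
        simp [mul_comm]; ring
    _ ≤ 2 * α * Real.sqrt s + 8 * K * L / Δ + C * K + Δ * s := by
        have h1 : (K:ℝ) * ((2 * α * Real.sqrt s) / K) = 2 * α * Real.sqrt s := by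
          field_simp
        have h2 : Δ * ∑ k, N k ≤ Δ * s := mul_le_mul_of_nonneg_left hNsum hΔ.le
        have h3 : (K:ℝ) * (8 * L / Δ) = 8 * K * L / Δ := by ring
        nlinarith
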